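/- arXiv:1706.09594 — 4 statements merged into one kernel-verified Lean document; each statement's English description precedes it below -/
import Mathlib

section
/- (Nielsen–Schreier index formula) Let n be a positive natural number and let H be a subgroup of the free group of rank n with finite index e. Then H is isomorphic to the free group of rank 1 + e·(n − 1). -/
noncomputable section
open scoped Classical
open CategoryTheory CategoryTheory.ActionCategory CategoryTheory.SingleObj Quiver FreeGroup
open IsFreeGroupoid IsFreeGroupoid.SpanningTree

universe u

namespace NSaux

variable {G : Type u} [Groupoid.{u} G] [IsFreeGroupoid G]
  (T : WideSubquiver (Symmetrify <| Generators G)) [Arborescence T]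

/-- Copy of the private `root'`. -/
def root'' : G := show T from root T

lemma treeHom_root'' : treeHom T (root'' T) = 𝟙 _ :=
  (treeHom_eq T Path.nil).trans rfl

/-- A `FreeGroupBasis` version of `IsFreeGroupoid.SpanningTree.endIsFree`. -/
def endBasis : FreeGroupBasis
    ((wideSubquiverEquivSetTotal <| wideSubquiverSymmetrify T)ᶜ : Set (Total (Generators G)))
    (End (root'' T)) :=
  FreeGroupBasis.ofUniqueLift ((wideSubquiverEquivSetTotal <| wideSubquiverSymmetrify T)ᶜ : Set _)
    (fun e => loopOfHom T (of e.val.hom))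
    (by
      intro X _ f
      let f' : Labelling (Generators G) X := fun a b e =>
        if h : e ∈ wideSubquiverSymmetrify T a b then 1 else f ⟨⟨a, b, e⟩, h⟩
      rcases unique_lift f' with ⟨F', hF', uF'⟩
      refine ⟨F'.mapEnd _, ?_, ?_⟩
      · suffices ∀ {x y} (q : x ⟶ y), F'.map (loopOfHom T q) = (F'.map q : X) by
          rintro ⟨⟨a, b, e⟩, h⟩
          erw [Functor.mapEnd_apply, this, hF']
          exact dif_neg h
        intros x y q
        suffices ∀ {a} (p : Path (root T) a), F'.map (homOfPath T p) = 1 by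
          simp only [this, treeHom, comp_as_mul, inv_as_inv, loopOfHom, inv_one, mul_one,
            one_mul, Functor.map_inv, Functor.map_comp]
          erw [this, this, inv_one, one_mul, mul_one]
        intro a p
        induction' p with b c p e ih
        · erw [homOfPath, F'.map_id, id_as_one]
        erw [homOfPath, F'.map_comp, comp_as_mul, ih, mul_one]
        rcases e with ⟨e | e, eT⟩
        · erw [hF']
          exact dif_pos (Or.inl eT)
        · erw [F'.map_inv, inv_as_inv, inv_eq_one, hF']
          exact dif_pos (Or.inr eT)
      · intro E hE
        ext x
        have key : loopOfHom T x = x := by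
          show treeHom T (root'' T) ≫ x ≫ inv (treeHom T (root'' T)) = x
          rw [treeHom_root'']
          erw [Category.id_comp, IsIso.inv_id]
          exact Category.comp_id x
        suffices h2 : (functorOfMonoidHom T E).map x = F'.map x by
          have h3 : E (loopOfHom T x) = F'.map x := h2
          exact (congrArg E key).symm.trans (h3.trans (Functor.mapEnd_apply _ _ _).symm)
        congr
        apply uF'
        intro a b e
        change E (loopOfHom T _) = dite _ _ _
        split_ifs with h
        · erw [loopOfHom_eq_id T e h, ← End.one_def, E.map_one]
        · exact hE ⟨⟨a, b, e⟩, h⟩)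

end NSaux

namespace NSaux

variable {G : Type u} [Groupoid.{u} G] [IsFreeGroupoid G]
  (T : WideSubquiver (Symmetrify <| Generators G)) [Arborescence T]

local notation "Tv" => WideSubquiver.toType (Symmetrify <| Generators G) T

/-- height of a vertex in the arborescence -/
noncomputable def ht (a : Tv) : ℕ := (default : Path (root Tv) a).length

lemma default_eq_cons {a b : Tv} (f : a ⟶ b) :
    (default : Path (root Tv) b) = (default : Path (root Tv) a).cons f :=
  (Unique.eq_default _).symm

lemma ht_succ {a b : Tv} (f : a ⟶ b) : ht T b = ht T a + 1 := by
  rw [ht, default_eq_cons T f]; rfl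

lemma arrow_src_eq {a b c : Tv} (f : a ⟶ c) (g : b ⟶ c) : a = b ∧ HEq f g := by
  have h : (default : Path (root Tv) a).cons f = (default : Path (root Tv) b).cons g := by
    rw [← default_eq_cons T f, ← default_eq_cons T g]
  exact ⟨Path.obj_eq_of_cons_eq_cons h, Path.hom_heq_of_cons_eq_cons h⟩

lemma no_arrow_to_root {a : Tv} (f : a ⟶ root Tv) : False := by
  have h := default_eq_cons T f
  have h2 := (Unique.eq_default (Path.nil : Path (root Tv) (root Tv))).symm
  rw [h2] at h
  have := congrArg Path.length h
  simp at this

lemma not_both {a b : Generators G} (e : a ⟶ b)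
    (h1 : Sum.inl e ∈ T a b) (h2 : Sum.inr e ∈ T b a) : False := by
  have f1 : (show Tv from a) ⟶ (show Tv from b) := ⟨Sum.inl e, h1⟩
  have f2 : (show Tv from b) ⟶ (show Tv from a) := ⟨Sum.inr e, h2⟩
  have g1 := ht_succ T f1
  have g2 := ht_succ T f2
  omega

/-- the target map from tree edges (as a set of total arrows) to non-root vertices -/
noncomputable def phi
    (x : (wideSubquiverEquivSetTotal <| wideSubquiverSymmetrify T : Set (Total (Generators G)))) :
    {b : Tv // b ≠ root Tv} :=
  if h : Sum.inl x.val.hom ∈ T x.val.left x.val.right then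
    ⟨show Tv from x.val.right, fun hr => no_arrow_to_root T
      (hr ▸ (⟨Sum.inl x.val.hom, h⟩ :
        (show Tv from x.val.left) ⟶ (show Tv from x.val.right)))⟩
  else
    ⟨show Tv from x.val.left, fun hr => no_arrow_to_root T
      (hr ▸ (⟨Sum.inr x.val.hom, x.prop.resolve_left h⟩ :
        (show Tv from x.val.right) ⟶ (show Tv from x.val.left)))⟩

lemma phi_bijective : Function.Bijective (phi T) := by
  constructor
  · rintro ⟨⟨a1, b1, x1⟩, he1⟩ ⟨⟨a2, b2, x2⟩, he2⟩ h
    simp only [phi] at h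
    split_ifs at h with h1 h2 h2
    all_goals
      have hv := congrArg Subtype.val h
      simp only at hv
    · -- both inl
      cases show b1 = b2 from hv
      obtain ⟨hsrc, hheq⟩ := arrow_src_eq T
        (⟨Sum.inl x1, h1⟩ : (show Tv from a1) ⟶ (show Tv from b1))
        (⟨Sum.inl x2, h2⟩ : (show Tv from a2) ⟶ (show Tv from b1))
      cases show a1 = a2 from hsrc
      have := congrArg Subtype.val (eq_of_heq hheq)
      simp only [Sum.inl.injEq] at this
      cases this
      rfl
    · -- inl / inr
      cases show b1 = a2 from hv
      obtain ⟨hsrc, hheq⟩ := arrow_src_eq T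
        (⟨Sum.inl x1, h1⟩ : (show Tv from a1) ⟶ (show Tv from b1))
        (⟨Sum.inr x2, he2.resolve_left h2⟩ : (show Tv from b2) ⟶ (show Tv from b1))
      cases show a1 = b2 from hsrc
      have := congrArg Subtype.val (eq_of_heq hheq)
      simp at this
    · -- inr / inl
      cases show a1 = b2 from hv
      obtain ⟨hsrc, hheq⟩ := arrow_src_eq T
        (⟨Sum.inr x1, he1.resolve_left h1⟩ : (show Tv from b1) ⟶ (show Tv from a1))
        (⟨Sum.inl x2, h2⟩ : (show Tv from a2) ⟶ (show Tv from a1))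
      cases show b1 = a2 from hsrc
      have := congrArg Subtype.val (eq_of_heq hheq)
      simp at this
    · -- both inr
      cases show a1 = a2 from hv
      obtain ⟨hsrc, hheq⟩ := arrow_src_eq T
        (⟨Sum.inr x1, he1.resolve_left h1⟩ : (show Tv from b1) ⟶ (show Tv from a1))
        (⟨Sum.inr x2, he2.resolve_left h2⟩ : (show Tv from b2) ⟶ (show Tv from a1))
      cases show b1 = b2 from hsrc
      have := congrArg Subtype.val (eq_of_heq hheq)
      simp only [Sum.inr.injEq] at this
      cases this
      rfl
  · rintro ⟨b, hb⟩
    rcases hp : (default : Path (root Tv) b) with _ | ⟨p, f⟩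
    · exact absurd rfl hb
    · obtain ⟨val, hval⟩ := f
      change _ ⊕ _ at val
      cases val with
      | inl x =>
          refine ⟨⟨⟨_, b, x⟩, Or.inl hval⟩, ?_⟩
          simp only [phi]
          rw [dif_pos hval]
      | inr x =>
          refine ⟨⟨⟨b, _, x⟩, Or.inr hval⟩, ?_⟩
          simp only [phi]
          rw [dif_neg (fun hcon => not_both T x hcon hval)]

end NSaux

namespace NSapp

open NSaux

attribute [-instance] IsFreeGroupoid.actionGroupoidIsFree

variable {n : ℕ} (H : Subgroup (FreeGroup (Fin n)))

local notation "G₀" => FreeGroup (Fin n)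
local notation "X₀" => FreeGroup (Fin n) ⧸ H
local notation "AC" => ActionCategory (FreeGroup (Fin n)) (FreeGroup (Fin n) ⧸ H)

/-- the action groupoid of the free group on the cosets is free, with explicitly
`Fin n`-labelled generating arrows. -/
instance myActionGroupoidIsFree : IsFreeGroupoid AC where
  quiverGenerators :=
    ⟨fun a b => { e : Fin n // FreeGroup.of e • a.back = b.back }⟩
  of := fun (e : { e // _ }) => ⟨FreeGroup.of e, e.property⟩
  unique_lift := by
    intro X _ f
    let f' : Fin n → (X₀ → X) ⋊[mulAutArrow] G₀ := fun e =>
      ⟨fun b => @f ⟨(), _⟩ ⟨(), b⟩ ⟨e, smul_inv_smul _ b⟩, FreeGroup.of e⟩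
    have huniq : ∃! F : G₀ →* (X₀ → X) ⋊[mulAutArrow] G₀, ∀ a, F (FreeGroup.of a) = f' a :=
      ⟨FreeGroup.lift f', fun a => FreeGroup.lift_apply_of,
        fun F hF => FreeGroup.ext_hom _ _ fun a => by rw [hF, FreeGroup.lift_apply_of]⟩
    rcases huniq with ⟨F', hF', uF'⟩
    refine ⟨uncurry F' ?_, ?_, ?_⟩
    · suffices SemidirectProduct.rightHom.comp F' = MonoidHom.id _ by
        exact DFunLike.ext_iff.mp this
      apply FreeGroup.ext_hom
      intro x
      rw [MonoidHom.comp_apply, hF']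
      rfl
    · rintro ⟨⟨⟩, a : X₀⟩ ⟨⟨⟩, b⟩ ⟨e, h : FreeGroup.of e • a = b⟩
      change (F' (FreeGroup.of _)).left _ = _
      rw [hF']
      cases inv_smul_eq_iff.mpr h.symm
      rfl
    · intro E hE
      have : curry E = F' := by
        apply uF'
        intro e
        ext
        · convert! hE _ _ _
          rfl
        · rfl
      apply Functor.hext
      · intro
        apply Unit.ext
      · refine ActionCategory.cases ?_
        intros
        subst this
        rfl

/-- total arrows of the generating quiver of the action groupoid -/
def totalEquiv : Total (Generators AC) ≃ (AC × Fin n) where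
  toFun e := (e.left, e.hom.val)
  invFun p := ⟨p.1, objEquiv G₀ X₀ (FreeGroup.of p.2 • p.1.back), ⟨p.2, rfl⟩⟩
  left_inv := by
    rintro ⟨l, r, ⟨i, hi⟩⟩
    have hr : objEquiv G₀ X₀ (FreeGroup.of i • ActionCategory.back l) = r := by
      rw [hi]
      exact (objEquiv G₀ X₀).apply_symm_apply r
    subst hr
    exact congrArg (Total.mk l _) (Subtype.ext rfl)
  right_inv := fun p => rfl

theorem main (hn : 0 < n) (e : ℕ) (he : 1 ≤ e) (hidx : H.index = e) :
    Nonempty (H ≃* FreeGroup (Fin (1 + e * (n - 1)))) := by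
  classical
  haveI : H.FiniteIndex := ⟨by omega⟩
  haveI : Finite AC := Finite.of_equiv _ (objEquiv G₀ X₀)
  letI r : AC := objEquiv G₀ X₀ ↑(1 : G₀)
  haveI : RootedConnected (show Symmetrify (Generators AC) from r) :=
    ⟨fun b => IsFreeGroupoid.path_nonempty_of_hom
      (@CategoryTheory.nonempty_hom_of_preconnected_groupoid AC _
        (by exact (inferInstance : IsConnected AC).toIsPreconnected) r b)⟩
  set T : WideSubquiver (Symmetrify (Generators AC)) :=
    geodesicSubtree (show Symmetrify (Generators AC) from r) with hT
  haveI : Finite (WideSubquiver.toType (Symmetrify (Generators AC)) T) :=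
    inferInstanceAs (Finite AC)
  haveI : Finite (Total (Generators AC)) := Finite.of_equiv _ (totalEquiv H).symm
  set S : Set (Total (Generators AC)) :=
    wideSubquiverEquivSetTotal (wideSubquiverSymmetrify T) with hSdef
  have hAC : Nat.card AC = e := by
    rw [Nat.card_congr (objEquiv G₀ X₀).symm]
    exact hidx
  have hTot : Nat.card (Total (Generators AC)) = e * n := by
    rw [Nat.card_congr (totalEquiv H), Nat.card_prod, hAC, Nat.card_eq_fintype_card,
      Fintype.card_fin]
  have hS : Nat.card ↥S = e - 1 := by
    rw [Nat.card_congr (Equiv.ofBijective _ (phi_bijective T))]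
    have h0 : Nat.card {b : WideSubquiver.toType (Symmetrify (Generators AC)) T //
        b ≠ root (WideSubquiver.toType (Symmetrify (Generators AC)) T)}
        = Nat.card ↥(({root (WideSubquiver.toType (Symmetrify (Generators AC)) T)}ᶜ :
            Set (WideSubquiver.toType (Symmetrify (Generators AC)) T))) :=
      Nat.card_congr (Equiv.subtypeEquivRight (by simp))
    have h1 := Set.ncard_add_ncard_compl
      ({root (WideSubquiver.toType (Symmetrify (Generators AC)) T)} :
        Set (WideSubquiver.toType (Symmetrify (Generators AC)) T))
    rw [Set.ncard_singleton] at h1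
    have h2 : Nat.card (WideSubquiver.toType (Symmetrify (Generators AC)) T) = e := hAC
    rw [h0, Nat.card_coe_set_eq]
    omega
  have hSc : Nat.card ↥(Sᶜ) = 1 + e * (n - 1) := by
    have h1 := Set.ncard_add_ncard_compl S
    rw [← Nat.card_coe_set_eq S, ← Nat.card_coe_set_eq Sᶜ] at h1
    rw [hTot] at h1
    rw [hS] at h1
    obtain ⟨m, rfl⟩ : ∃ m, n = m + 1 := ⟨n - 1, by omega⟩
    have h3 : e * (m + 1) = e * m + e := by ring
    simp only [Nat.add_sub_cancel]
    omega
  haveI : Fintype ↥(Sᶜ) := Fintype.ofFinite _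
  have eqv : ↥(Sᶜ) ≃ Fin (1 + e * (n - 1)) :=
    Fintype.equivFinOfCardEq (by rw [← Nat.card_eq_fintype_card]; exact hSc)
  exact ⟨(endMulEquivSubgroup H).symm.trans ((endBasis T).reindex eqv).repr⟩

end NSapp


end

/-- Nielsen–Schreier index formula: a subgroup of finite index `e` in the free
group of rank `n > 0` is free of rank `1 + e * (n - 1)`. -/
theorem nielsen_schreier_index_formula (n : ℕ) (hn : 0 < n)
    (H : Subgroup (FreeGroup (Fin n))) (e : ℕ) (he : 1 ≤ e) (hidx : H.index = e) :
    Nonempty (H ≃* FreeGroup (Fin (1 + e * (n - 1)))) := by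
  exact NSapp.main H hn e he hidx
end

section
/- Let F be a finitely generated free group and let N be a nontrivial normal subgroup of F of infinite index. Then N is not finitely generated (as a group). -/
set_option linter.unusedSectionVars false

namespace FGAux
open FreeGroup List

variable {α : Type*} [DecidableEq α]


/-- inverse of a letter -/
def invL (p : α × Bool) : α × Bool := (p.1, !p.2)

lemma invL_invL (p : α × Bool) : invL (invL p) = p := by
  simp [invL]

/-- non-cancelling adjacency -/
def R (p q : α × Bool) : Prop := ¬(p.1 = q.1 ∧ p.2 = !q.2)

lemma r_iff {p q : α × Bool} : R p q ↔ q ≠ invL p := by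
  rcases p with ⟨a, b⟩; rcases q with ⟨c, d⟩
  unfold R invL
  cases b <;> cases d <;> simp [Prod.ext_iff, eq_comm]

lemma chain'_reduce (w : List (α × Bool)) : List.Chain' R (reduce w) := by
  induction w with
  | nil => exact List.IsChain.nil
  | cons a t ih =>
    rw [reduce.cons]
    rcases h : reduce t with _ | ⟨hd, tl⟩
    · exact List.isChain_singleton _
    · rw [h] at ih
      by_cases hc : a.1 = hd.1 ∧ a.2 = !hd.2
      · simpa [hc, List.Chain'] using ih.tail
      · simpa [hc, List.Chain'] using List.isChain_cons_cons.mpr ⟨hc, ih⟩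

lemma reduce_eq_self {w : List (α × Bool)} (h : List.Chain' R w) : reduce w = w := by
  induction w with
  | nil => simp
  | cons a t ih =>
    rw [reduce.cons, ih h.tail]
    rcases t with _ | ⟨hd, tl⟩
    · simp
    · have hr' : ¬(a.1 = hd.1 ∧ a.2 = !hd.2) := (List.isChain_cons_cons.mp h).1
      show (if a.1 = hd.1 ∧ a.2 = !hd.2 then tl else a :: hd :: tl) = a :: hd :: tl
      rw [if_neg hr']

lemma chain'_toWord (x : FreeGroup α) : List.Chain' R x.toWord := by
  have := chain'_reduce (α := α) x.toWord
  rwa [reduce_toWord] at this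

lemma toWord_mul {x y : FreeGroup α} (h : List.Chain' R (x.toWord ++ y.toWord)) :
    (x * y).toWord = x.toWord ++ y.toWord := by
  conv_lhs => rw [← mk_toWord (x := x), ← mk_toWord (x := y)]
  rw [mul_mk, toWord_mk, reduce_eq_self h]

def noCancel (x y : FreeGroup α) : Prop := x = 1 ∨ y = 1 ∨ x.toWord.head? ≠ y.toWord.head?

lemma toWord_inv_mul {x y : FreeGroup α} (h : noCancel x y) :
    (x⁻¹ * y).toWord = invRev x.toWord ++ y.toWord := by
  rcases h with rfl | rfl | h
  · simp [toWord_one, invRev]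
  · simp [toWord_one, toWord_inv]
  · rw [← toWord_inv]
    apply toWord_mul
    rw [List.Chain', List.isChain_append]
    refine ⟨chain'_toWord _, chain'_toWord _, ?_⟩
    intro p hp q hq
    rw [toWord_inv] at hp
    rcases hx : x.toWord with _ | ⟨a, t⟩
    · rw [hx] at hp
      simp [invRev] at hp
    · rw [hx] at hp
      have hinv : invRev (a :: t) = ((a :: t).map invL).reverse := rfl
      rw [hinv, List.getLast?_reverse, List.head?_map] at hp
      simp only [List.head?_cons, Option.map_some, Option.mem_def, Option.some.injEq] at hp
      have hq' : y.toWord.head? = some q := Option.mem_def.mp hq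
      rw [r_iff, ← hp]
      have hLL : invL (invL a) = a := by unfold invL; simp
      rw [hLL]
      intro hqa
      exact h (by rw [hx, hq']; simp [hqa])

lemma norm_noCancel {x y : FreeGroup α} (h : noCancel x y) :
    norm (x⁻¹ * y) = norm x + norm y := by
  have : norm (x⁻¹ * y) = (x⁻¹ * y).toWord.length := rfl
  rw [this, toWord_inv_mul h, List.length_append, invRev_length]
  rfl


lemma split {A B C : FreeGroup α} (h : noCancel A C) : noCancel A B ∨ noCancel B C := by
  rcases h with h | h | h
  · exact Or.inl (Or.inl h)
  · exact Or.inr (Or.inr (Or.inl h))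
  · by_cases hb : A.toWord.head? = B.toWord.head?
    · exact Or.inr (Or.inr (Or.inr (hb ▸ h)))
    · exact Or.inl (Or.inr (Or.inr hb))

def Btw (a u b : FreeGroup α) : Prop := noCancel (u⁻¹ * a) (u⁻¹ * b)

lemma btw_self (a b : FreeGroup α) : Btw a a b := Or.inl (by simp)

lemma btw_split {a u b c : FreeGroup α} (h : Btw a u c) : Btw a u b ∨ Btw b u c := split h


lemma btw_norm {p u q : FreeGroup α} (h : Btw p u q) : norm (u⁻¹ * p) ≤ norm (p⁻¹ * q) := by
  have h2 := norm_noCancel h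
  have e : (u⁻¹ * p)⁻¹ * (u⁻¹ * q) = p⁻¹ * q := by group
  rw [e] at h2
  omega


lemma chain_btw : ∀ (l : List (FreeGroup α)) (u : FreeGroup α), Btw 1 u l.prod →
    u = 1 ∨ ∃ i, ∃ _ : i < l.length, Btw ((l.take i).prod) u ((l.take (i + 1)).prod) := by
  intro l
  induction l using List.reverseRecOn with
  | nil =>
    intro u h
    left
    rcases h with h | h | h
    · simpa using h
    · simpa using h
    · exact absurd rfl h
  | append_singleton l' s ih =>
    intro u h
    rw [List.prod_append, List.prod_cons, List.prod_nil, mul_one] at h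
    rcases btw_split (b := l'.prod) h with h1 | h2
    · rcases ih u h1 with rfl | ⟨i, hi, hb⟩
      · exact Or.inl rfl
      · refine Or.inr ⟨i, ?_, ?_⟩
        · simp only [List.length_append, List.length_singleton]
          omega
        · rwa [List.take_append_of_le_length (by omega),
            List.take_append_of_le_length (by omega)]
    · refine Or.inr ⟨l'.length, ?_, ?_⟩
      · simp
      · rw [List.take_left, List.take_of_length_le (by simp),
          List.prod_append, List.prod_cons, List.prod_nil, mul_one]
        exact h2

lemma invRev_eq (w : List (α × Bool)) : invRev w = (w.map invL).reverse := rfl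

lemma coset_rep (k : ℕ) (hk : 2 ≤ k) (N : Subgroup (FreeGroup (Fin k))) (hN : N.Normal)
    (x : FreeGroup (Fin k)) (hxN : x ∈ N) (hx1 : x ≠ 1)
    (S : Set (FreeGroup (Fin k))) (hS : Subgroup.closure S = N)
    (L : ℕ) (hL : ∀ s ∈ S, norm s ≤ L) (g : FreeGroup (Fin k)) :
    ∃ z, FreeGroup.norm z ≤ L + 1 ∧ (QuotientGroup.mk g : _ ⧸ N) = QuotientGroup.mk z := by
  classical
  -- first and last letters of x
  have hwx : x.toWord ≠ [] := fun h => hx1 (toWord_eq_nil_iff.mp h)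
  set hH := x.toWord.head hwx with hHdef
  set lX := x.toWord.getLast hwx with lXdef
  have hHq : x.toWord.head? = some hH := List.head?_eq_head _
  have lXq : x.toWord.getLast? = some lX := List.getLast?_eq_getLast hwx
  -- choose a letter lam avoiding the three forbidden letters
  set forb : Finset (Fin k × Bool) :=
    {invL hH, lX} ∪ ((g.toWord.getLast?).map invL).toFinset with forbdef
  have hcard : forb.card ≤ 3 := by
    apply le_trans (Finset.card_union_le _ _)
    have h1 : ({invL hH, lX} : Finset (Fin k × Bool)).card ≤ 2 :=
      Finset.card_insert_le _ _ |>.trans (by simp)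
    have h2 : (((g.toWord.getLast?).map invL).toFinset).card ≤ 1 := by
      rcases (g.toWord.getLast?).map invL with _ | a <;> simp
    omega
  have : ∃ lam : Fin k × Bool, lam ∉ forb := by
    by_contra hcon
    push_neg at hcon
    have : (Finset.univ : Finset (Fin k × Bool)) ⊆ forb := fun a _ => hcon a
    have := Finset.card_le_card this
    simp [Fintype.card_prod] at this
    omega
  obtain ⟨lam, hlam⟩ := this
  have hlam1 : lam ≠ invL hH := fun h => hlam (by rw [forbdef]; simp [h])
  have hlam2 : lam ≠ lX := fun h => hlam (by rw [forbdef]; simp [h])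
  have hlam3 : ∀ p ∈ g.toWord.getLast?, lam ≠ invL p := by
    intro p hp h
    apply hlam
    rw [forbdef]
    simp only [Finset.mem_union, Option.mem_toFinset]
    right
    rw [Option.mem_def.mp hp]
    simp [h]
  -- g' = g * lam
  set g' : FreeGroup (Fin k) := g * mk [lam] with g'def
  have hA : g'.toWord = g.toWord ++ [lam] := by
    rw [g'def]
    conv_lhs => rw [← mk_toWord (x := g), mul_mk, toWord_mk]
    apply reduce_eq_self
    rw [List.Chain', List.isChain_append]
    refine ⟨chain'_toWord g, List.isChain_singleton _, ?_⟩
    intro p hp q hq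
    simp only [List.head?_cons, Option.mem_def, Option.some.injEq] at hq
    subst hq
    exact r_iff.mpr (hlam3 p hp)
  -- the conjugate w = g' x g'⁻¹ and its reduced word
  have hxg : (x * g'⁻¹).toWord = x.toWord ++ invRev g'.toWord := by
    rw [← toWord_inv]
    apply toWord_mul
    rw [toWord_inv, List.Chain', List.isChain_append]
    refine ⟨chain'_toWord x, by rw [← toWord_inv]; exact chain'_toWord _, ?_⟩
    intro p hp q hq
    rw [lXq] at hp
    simp only [Option.mem_def, Option.some.injEq] at hp
    subst hp
    rw [invRev_eq, List.head?_reverse, List.getLast?_map, hA] at hq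
    simp only [List.getLast?_append, List.getLast?_singleton, Option.or_some, Option.some_or,
      Option.map_some, Option.mem_def, Option.some.injEq] at hq
    subst hq
    rw [r_iff]
    intro h
    apply hlam2
    have h2 := congrArg invL h
    rwa [invL_invL, invL_invL] at h2
  have hw : (g' * x * g'⁻¹).toWord = g'.toWord ++ (x.toWord ++ invRev g'.toWord) := by
    rw [mul_assoc, ← hxg]
    apply toWord_mul
    rw [hxg, List.Chain', List.isChain_append]
    refine ⟨chain'_toWord g', by rw [← hxg]; exact chain'_toWord _, ?_⟩
    intro p hp q hq
    rw [hA] at hp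
    simp only [List.getLast?_append, List.getLast?_singleton, Option.or_some, Option.some_or,
      Option.mem_def, Option.some.injEq] at hp
    subst hp
    rw [List.head?_append, hHq] at hq
    simp only [Option.or_some, Option.some_or, Option.mem_def, Option.some.injEq] at hq
    subst hq
    rw [r_iff]
    intro h
    apply hlam1
    have h2 := congrArg invL h
    rw [invL_invL] at h2
    exact h2.symm
  -- w = g' x g'⁻¹ lies in N and g' is "between" 1 and w
  set w : FreeGroup (Fin k) := g' * x * g'⁻¹ with wdef
  have hwN : w ∈ N := hN.conj_mem x hxN g'
  have hbtw : Btw 1 g' w := by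
    unfold Btw noCancel
    right; right
    have e1 : g'⁻¹ * 1 = g'⁻¹ := mul_one _
    have e2 : g'⁻¹ * w = x * g'⁻¹ := by rw [wdef]; group
    rw [e1, e2, hxg, toWord_inv, invRev_eq, List.head?_reverse, List.getLast?_map, hA]
    simp only [List.getLast?_append, List.getLast?_singleton, Option.or_some, Option.some_or, Option.map_some]
    rw [List.head?_append, hHq]
    simp only [Option.or_some, Option.some_or, ne_eq, Option.some.injEq]
    intro h
    apply hlam1
    have h2 := congrArg invL h.symm
    rw [invL_invL] at h2
    exact h2.symm
  -- express w as a product of generators of norm ≤ L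
  have hwS : w ∈ Submonoid.closure (S ∪ S⁻¹) := by
    have : w ∈ (Subgroup.closure S).toSubmonoid := by rw [hS]; exact hwN
    rwa [Subgroup.closure_toSubmonoid] at this
  obtain ⟨l, hl, hlprod⟩ := Submonoid.exists_list_of_mem_closure hwS
  have hlN : ∀ y ∈ l, y ∈ N := by
    intro y hy
    rcases hl y hy with h | h
    · rw [← hS]; exact Subgroup.subset_closure h
    · rw [← hS]
      have : y⁻¹ ∈ S := Set.mem_inv.mp h
      simpa using inv_mem (Subgroup.subset_closure this)
  have hlnorm : ∀ y ∈ l, FreeGroup.norm y ≤ L := by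
    intro y hy
    rcases hl y hy with h | h
    · exact hL y h
    · have : y⁻¹ ∈ S := Set.mem_inv.mp h
      have := hL _ this
      rwa [norm_inv_eq] at this
  rcases chain_btw l g' (by rw [hlprod]; exact hbtw) with h1 | ⟨i, hi, hb⟩
  · -- g' = 1, so g has norm ≤ 1
    refine ⟨g, ?_, rfl⟩
    have : g = (mk [lam])⁻¹ := by
      apply eq_inv_of_mul_eq_one_left
      rw [← g'def]
      exact h1
    rw [this, norm_inv_eq]
    calc FreeGroup.norm (mk [lam]) ≤ [lam].length := norm_mk_le
    _ ≤ L + 1 := by simp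
  · set p := (l.take i).prod with pdef
    have hpN : p ∈ N := Subgroup.list_prod_mem _ (fun y hy => hlN y (List.take_subset _ _ hy))
    have hnorm1 : FreeGroup.norm (g'⁻¹ * p) ≤ L := by
      have h2 := btw_norm hb
      rw [List.prod_take_succ _ _ hi] at h2
      have e : p⁻¹ * (p * l[i]) = l[i] := by group
      rw [e] at h2
      exact h2.trans (hlnorm _ (List.getElem_mem hi))
    refine ⟨p⁻¹ * g, ?_, ?_⟩
    · have e : p⁻¹ * g = (g'⁻¹ * p)⁻¹ * (mk [lam])⁻¹ := by rw [g'def]; group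
      rw [e]
      calc FreeGroup.norm ((g'⁻¹ * p)⁻¹ * (mk [lam])⁻¹)
          ≤ FreeGroup.norm (g'⁻¹ * p)⁻¹ + FreeGroup.norm (mk [lam])⁻¹ := norm_mul_le _ _
        _ ≤ L + 1 := by
            rw [norm_inv_eq, norm_inv_eq]
            have : FreeGroup.norm (mk [lam]) ≤ 1 := norm_mk_le
            omega
    · rw [QuotientGroup.eq]
      have e : g⁻¹ * (p⁻¹ * g) = g⁻¹ * p⁻¹ * (g⁻¹)⁻¹ := by group
      rw [e]
      exact hN.conj_mem _ (inv_mem hpN) _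

lemma finite_quotient (k : ℕ) (hk : 2 ≤ k) (N : Subgroup (FreeGroup (Fin k))) (hN : N.Normal)
    (hne : N ≠ ⊥) (hFG : N.FG) : Finite (FreeGroup (Fin k) ⧸ N) := by
  classical
  obtain ⟨⟨x, hxN⟩, ha⟩ := Subgroup.ne_bot_iff_exists_ne_one.mp hne
  have hx1 : x ≠ 1 := fun h => ha (Subtype.ext h)
  obtain ⟨Sf, hSf⟩ := hFG
  set L := Sf.sup FreeGroup.norm with Ldef
  have hL : ∀ s ∈ (Sf : Set (FreeGroup (Fin k))), FreeGroup.norm s ≤ L :=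
    fun s hs => Finset.le_sup hs
  have hfin : {l : List (Fin k × Bool) | l.length ≤ L + 1}.Finite :=
    List.finite_length_le _ _
  have : Finite {l : List (Fin k × Bool) // l.length ≤ L + 1} := hfin.to_subtype
  apply Finite.of_surjective
    (fun z : {l : List (Fin k × Bool) // l.length ≤ L + 1} =>
      (QuotientGroup.mk (FreeGroup.mk z.1) : FreeGroup (Fin k) ⧸ N))
  intro q
  induction q using QuotientGroup.induction_on with
  | H g =>
    obtain ⟨z, hz1, hz2⟩ := coset_rep k hk N hN x hxN hx1 Sf hSf L hL g
    refine ⟨⟨z.toWord, hz1⟩, ?_⟩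
    simp only [mk_toWord]
    exact hz2.symm

lemma finite_quotient_one (N : Subgroup (FreeGroup (Fin 1))) (hN : N.Normal)
    (hne : N ≠ ⊥) : Finite (FreeGroup (Fin 1) ⧸ N) := by
  classical
  set t : FreeGroup (Fin 1) := of 0 with tdef
  have hall : ∀ g : FreeGroup (Fin 1), ∃ n : ℤ, t ^ n = g := by
    intro g
    have : g ∈ Subgroup.closure {t} := by
      have h1 : (Set.range (of : Fin 1 → FreeGroup (Fin 1))) = {t} := by
        rw [Set.range_unique]
        rfl
      rw [← h1, FreeGroup.closure_range_of]
      trivial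
    exact Subgroup.mem_closure_singleton.mp this
  obtain ⟨⟨x, hxN⟩, ha⟩ := Subgroup.ne_bot_iff_exists_ne_one.mp hne
  have hx1 : x ≠ 1 := fun h => ha (Subtype.ext h)
  obtain ⟨m, hm⟩ := hall x
  have hm0 : m ≠ 0 := by rintro rfl; exact hx1 (by rw [← hm]; simp)
  set M : ℕ := m.natAbs with Mdef
  have hM0 : 0 < M := Int.natAbs_pos.mpr hm0
  have htM : (QuotientGroup.mk t : FreeGroup (Fin 1) ⧸ N) ^ (M : ℤ) = 1 := by
    have hmem : t ^ (M : ℤ) ∈ N := by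
      rcases Int.natAbs_eq m with h | h
      · rw [← h, hm]; exact hxN
      · have : (M : ℤ) = -m := by omega
        rw [this, zpow_neg, hm]; exact inv_mem hxN
    have hz := map_zpow (QuotientGroup.mk' N) t (M : ℤ)
    simp only [QuotientGroup.mk'_apply] at hz
    rw [← hz]
    exact (QuotientGroup.eq_one_iff _).mpr hmem
  apply Finite.of_surjective
    (fun j : Fin M => (QuotientGroup.mk t : FreeGroup (Fin 1) ⧸ N) ^ (j : ℕ))
  intro q
  induction q using QuotientGroup.induction_on with
  | H g =>
    obtain ⟨n, hn⟩ := hall g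
    set r : ℤ := n % (M : ℤ) with rdef
    have hr0 : 0 ≤ r := Int.emod_nonneg n (by exact_mod_cast hM0.ne')
    have hrM : r < (M : ℤ) := Int.emod_lt_of_pos n (by exact_mod_cast hM0)
    refine ⟨⟨r.toNat, by omega⟩, ?_⟩
    have e1 : ((QuotientGroup.mk t : FreeGroup (Fin 1) ⧸ N)) ^ ((r.toNat : ℕ)) =
        (QuotientGroup.mk t : FreeGroup (Fin 1) ⧸ N) ^ r := by
      rw [← zpow_natCast]
      congr 1
      omega
    have e2 : (QuotientGroup.mk t : FreeGroup (Fin 1) ⧸ N) ^ r =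
        (QuotientGroup.mk t : FreeGroup (Fin 1) ⧸ N) ^ n := by
      have hdiv : n = (M : ℤ) * (n / (M : ℤ)) + r := (Int.mul_ediv_add_emod n (M : ℤ)).symm
      calc (QuotientGroup.mk t : FreeGroup (Fin 1) ⧸ N) ^ r
          = ((QuotientGroup.mk t : FreeGroup (Fin 1) ⧸ N) ^ (M : ℤ)) ^ (n / (M : ℤ)) *
            (QuotientGroup.mk t : FreeGroup (Fin 1) ⧸ N) ^ r := by rw [htM]; simp
        _ = (QuotientGroup.mk t : FreeGroup (Fin 1) ⧸ N) ^ n := by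
            rw [← zpow_mul, ← zpow_add, ← hdiv]
    have e3 : (QuotientGroup.mk t : FreeGroup (Fin 1) ⧸ N) ^ n = QuotientGroup.mk g := by
      have hz := map_zpow (QuotientGroup.mk' N) t n
      simp only [QuotientGroup.mk'_apply] at hz
      rw [← hz, hn]
    simp only [e1, e2, e3]

end FGAux

open FGAux in
/-- A nontrivial normal subgroup of infinite index in a finitely generated free
group is not finitely generated. -/
theorem normal_subgroup_infinite_index_not_fg (F : Type*) [Group F] (k : ℕ) (hk : 1 ≤ k)
    (hfree : Nonempty (F ≃* FreeGroup (Fin k)))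
    (N : Subgroup F) (hN : N.Normal) (hnontriv : N ≠ ⊥)
    (hinf : Infinite (F ⧸ N)) : ¬ N.FG := by
  intro hFG
  obtain ⟨e⟩ := hfree
  haveI : N.Normal := hN
  set M : Subgroup (FreeGroup (Fin k)) := Subgroup.map (↑e) N with Mdef
  haveI hMnormal : M.Normal := hN.map _ e.surjective
  have hMne : M ≠ ⊥ := by
    rw [Mdef, Ne, Subgroup.map_eq_bot_iff_of_injective N e.injective]
    exact hnontriv
  have hMFG : M.FG := by
    obtain ⟨S, hS⟩ := hFG
    refine ⟨S.image e, ?_⟩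
    rw [Finset.coe_image, Mdef, ← hS, MonoidHom.map_closure]
    rfl
  have hinfM : Infinite (FreeGroup (Fin k) ⧸ M) := by
    have q := QuotientGroup.congr N M e rfl
    exact Equiv.infinite_iff q.toEquiv |>.mp hinf
  rcases eq_or_lt_of_le hk with h1 | h2
  · have hk1 : k = 1 := h1.symm
    subst hk1
    haveI := finite_quotient_one M hMnormal hMne
    exact not_finite (FreeGroup (Fin 1) ⧸ M)
  · haveI := finite_quotient k h2 M hMnormal hMne hMFG
    exact not_finite (FreeGroup (Fin k) ⧸ M)
end

section
/- For all natural numbers n ≥ 2 and k ≥ 1, the free group of rank n has a normal subgroup of index k that is isomorphic to the free group of rank 1 + k·(n − 1). -/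
open FreeGroup SemidirectProduct Multiplicative

namespace FGNS

/-- Shift equivalence on `ℤ × J`. -/
def shE (J : Type) (m : ℤ) : (ℤ × J) ≃ (ℤ × J) :=
  (Equiv.addRight m).prodCongr (Equiv.refl J)

@[simp] lemma shE_apply (J : Type) (m : ℤ) (p : ℤ × J) : shE J m p = (p.1 + m, p.2) := rfl

/-- The shift action of `ℤ` on `FreeGroup (ℤ × J)`. -/
def sh (J : Type) : Multiplicative ℤ →* MulAut (FreeGroup (ℤ × J)) where
  toFun m := freeGroupCongr (shE J (toAdd m))
  map_one' := by
    show freeGroupCongr (shE J (toAdd (1 : Multiplicative ℤ))) = 1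
    have : shE J (toAdd (1 : Multiplicative ℤ)) = Equiv.refl _ := by
      ext p <;> simp
    rw [this, freeGroupCongr_refl]; rfl
  map_mul' a b := by
    show freeGroupCongr (shE J (toAdd (a * b))) =
      freeGroupCongr (shE J (toAdd a)) * freeGroupCongr (shE J (toAdd b))
    have : shE J (toAdd (a * b)) = (shE J (toAdd b)).trans (shE J (toAdd a)) := by
      ext p <;> simp [add_comm, add_assoc, add_left_comm]
    rw [this, ← freeGroupCongr_trans]; rfl

@[simp] lemma sh_of (J : Type) (m : Multiplicative ℤ) (p : ℤ × J) :
    sh J m (FreeGroup.of p) = FreeGroup.of (p.1 + toAdd m, p.2) := by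
  simp [sh]

/-- `FreeGroup (ℤ × J) ⋊ ℤ`, with the shift action. -/
abbrev GG (J : Type) := FreeGroup (ℤ × J) ⋊[sh J] Multiplicative ℤ

def fA (J : Type) : FreeGroup (Option J) →* GG J :=
  FreeGroup.lift (fun o => Option.elim o (inr (ofAdd 1)) (fun j => inl (FreeGroup.of (0, j))))

@[simp] lemma fA_of_none (J : Type) : fA J (FreeGroup.of none) = inr (ofAdd 1) := by
  simp [fA]

@[simp] lemma fA_of_some (J : Type) (j : J) : fA J (FreeGroup.of (some j)) = inl (FreeGroup.of (0, j)) := by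
  simp [fA]

def gA1 (J : Type) : FreeGroup (ℤ × J) →* FreeGroup (Option J) :=
  FreeGroup.lift (fun p =>
    FreeGroup.of none ^ p.1 * FreeGroup.of (some p.2) * FreeGroup.of none ^ (-p.1))

def gA2 (J : Type) : Multiplicative ℤ →* FreeGroup (Option J) :=
  zpowersHom _ (FreeGroup.of none)

lemma compatA (J : Type) : ∀ g, (gA1 J).comp ((sh J g).toMonoidHom) =
    (MulAut.conj ((gA2 J) g)).toMonoidHom.comp (gA1 J) := by
  intro g
  apply FreeGroup.ext_hom
  intro p
  simp only [MonoidHom.comp_apply, MulEquiv.coe_toMonoidHom, sh_of, gA1, gA2,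
    FreeGroup.lift_apply_of, MulAut.conj_apply, zpowersHom_apply]
  rw [zpow_add, neg_add, zpow_add]
  group

def gA (J : Type) : GG J →* FreeGroup (Option J) :=
  SemidirectProduct.lift (gA1 J) (gA2 J) (compatA J)

lemma gA_comp_fA (J : Type) : (gA J).comp (fA J) = MonoidHom.id _ := by
  apply FreeGroup.ext_hom
  intro a
  cases a with
  | none => simp [fA, gA, gA2]
  | some j => simp [fA, gA, gA1]

lemma fA_comp_gA (J : Type) : (fA J).comp (gA J) = MonoidHom.id _ := by
  apply SemidirectProduct.hom_ext
  · apply FreeGroup.ext_hom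
    intro p
    simp only [MonoidHom.comp_apply, MonoidHom.id_apply, gA, lift_inl, gA1, FreeGroup.lift_apply_of]
    rw [MonoidHom.map_mul, MonoidHom.map_mul, MonoidHom.map_zpow, MonoidHom.map_zpow,
      fA_of_none, fA_of_some, ← MonoidHom.map_zpow inr, ← MonoidHom.map_zpow inr]
    have h1 : (ofAdd (1:ℤ)) ^ p.1 = ofAdd p.1 := by
      rw [← ofAdd_zsmul]; simp
    have h2 : (ofAdd (1:ℤ)) ^ (-p.1) = (ofAdd p.1)⁻¹ := by
      rw [← ofAdd_zsmul]; simp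
    rw [h1, h2, ← inl_aut]
    simp
  · apply MonoidHom.ext
    intro x
    simp only [MonoidHom.comp_apply, MonoidHom.id_apply, gA, lift_inr, gA2, zpowersHom_apply]
    rw [MonoidHom.map_zpow, fA_of_none, ← MonoidHom.map_zpow inr]
    congr 1
    rw [← ofAdd_zsmul]
    simp

/-- `FreeGroup (Option J) ≃* FreeGroup (ℤ × J) ⋊ ℤ` -/
def equivA (J : Type) : FreeGroup (Option J) ≃* GG J :=
  MonoidHom.toMulEquiv (fA J) (gA J) (gA_comp_fA J) (fA_comp_gA J)

section K

variable (J : Type) (k : ℕ) [NeZero k]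

def Ek : (ℤ × (Fin k × J)) ≃ (ℤ × J) :=
  (Equiv.prodAssoc ℤ (Fin k) J).symm.trans (((Int.divModEquiv k).symm).prodCongr (Equiv.refl J))

@[simp] lemma Ek_apply (p : ℤ × (Fin k × J)) : Ek J k p = (p.1 * k + (p.2.1 : ℤ), p.2.2) := rfl

def ψ : GG (Fin k × J) →* GG J :=
  SemidirectProduct.lift (inl.comp (freeGroupCongr (Ek J k)).toMonoidHom)
    (inr.comp (zpowersHom _ (ofAdd (k : ℤ))))
    (by
      intro g
      apply FreeGroup.ext_hom
      rintro ⟨i, r, j⟩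
      simp only [MonoidHom.comp_apply, MulEquiv.coe_toMonoidHom, sh_of,
        freeGroupCongr_apply, FreeGroup.map.of, Ek_apply, MulAut.conj_apply,
        zpowersHom_apply, MulEquiv.coe_toMonoidHom]
      have hpow : (ofAdd (k : ℤ)) ^ toAdd g = ofAdd (toAdd g * k) := by
        rw [← ofAdd_zsmul]; simp [mul_comm]
      rw [hpow, ← MonoidHom.map_inv inr, ← inl_aut, sh_of]
      simp only [inl_inj]
      have : (i + toAdd g) * (k : ℤ) + ((r : ℕ) : ℤ)
          = i * (k : ℤ) + ((r : ℕ) : ℤ) + toAdd g * k := by ring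
      rw [this]
      rfl)

lemma ψ_apply (w : FreeGroup (ℤ × (Fin k × J))) (g : Multiplicative ℤ) :
    ψ J k ⟨w, g⟩ = ⟨freeGroupCongr (Ek J k) w, ofAdd (toAdd g * k)⟩ := by
  have : (⟨w, g⟩ : GG (Fin k × J)) = inl w * inr g := by
    rw [mk_eq_inl_mul_inr]
  rw [this, MonoidHom.map_mul, ψ, lift_inl, lift_inr]
  simp only [MonoidHom.comp_apply, MulEquiv.coe_toMonoidHom, zpowersHom_apply]
  have hpow : (ofAdd (k : ℤ)) ^ toAdd g = ofAdd (toAdd g * k) := by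
    rw [← ofAdd_zsmul]; simp [mul_comm]
  rw [hpow, ← mk_eq_inl_mul_inr]

lemma ψ_injective : Function.Injective (ψ J k) := by
  intro x y h
  obtain ⟨w₁, g₁⟩ := x
  obtain ⟨w₂, g₂⟩ := y
  rw [ψ_apply, ψ_apply] at h
  have h₁ := congrArg SemidirectProduct.left h
  have h₂ := congrArg SemidirectProduct.right h
  simp only at h₁ h₂
  have hk : (k : ℤ) ≠ 0 := Int.natCast_ne_zero.2 (NeZero.ne k)
  have : toAdd g₁ = toAdd g₂ := by
    have := congrArg toAdd h₂
    simp only [toAdd_ofAdd] at this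
    exact mul_right_cancel₀ hk this
  have hg : g₁ = g₂ := by
    have := congrArg ofAdd this
    simpa using this
  have hw : w₁ = w₂ := (freeGroupCongr (Ek J k)).injective h₁
  rw [hw, hg]

/-- Map to `ZMod k` detecting divisibility of the `ℤ`-component. -/
def χ : GG J →* Multiplicative (ZMod k) :=
  (AddMonoidHom.toMultiplicative (Int.castAddHom (ZMod k))).comp rightHom

lemma range_ψ : (ψ J k).range = (χ J k).ker := by
  ext x
  constructor
  · rintro ⟨⟨w, g⟩, rfl⟩
    rw [ψ_apply, MonoidHom.mem_ker, χ]
    simp only [MonoidHom.comp_apply]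
    have : rightHom (⟨freeGroupCongr (Ek J k) w, ofAdd (toAdd g * k)⟩ : GG J)
        = ofAdd (toAdd g * k) := rfl
    rw [this]
    simp only [AddMonoidHom.toMultiplicative_apply_apply, toAdd_ofAdd, Int.coe_castAddHom]
    have : ((toAdd g * k : ℤ) : ZMod k) = 0 := by
      push_cast
      simp [ZMod.natCast_self]
    rw [this]
    rfl
  · intro hx
    obtain ⟨v, y⟩ := x
    rw [MonoidHom.mem_ker, χ] at hx
    simp only [MonoidHom.comp_apply] at hx
    have hy : rightHom (⟨v, y⟩ : GG J) = y := rfl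
    rw [hy] at hx
    have : ((toAdd y : ℤ) : ZMod k) = 0 := by
      have := congrArg toAdd hx
      simpa using this
    obtain ⟨m, hm⟩ := (ZMod.intCast_zmod_eq_zero_iff_dvd _ _).1 this
    refine ⟨⟨(freeGroupCongr (Ek J k)).symm v, ofAdd m⟩, ?_⟩
    rw [ψ_apply]
    congr 1
    · exact (freeGroupCongr (Ek J k)).apply_symm_apply v
    · rw [toAdd_ofAdd]
      conv_rhs => rw [← ofAdd_toAdd y]
      rw [hm]
      congr 1
      ring

end K

end FGNS

/-- For all naturals `n ≥ 2` and `k ≥ 1`, the free group of rank `n` has a normal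
subgroup of index `k` isomorphic to the free group of rank `1 + k * (n - 1)`. -/
theorem free_group_exists_normal_subgroup (n k : ℕ) (hn : 2 ≤ n) (hk : 1 ≤ k) :
    ∃ N : Subgroup (FreeGroup (Fin n)), N.Normal ∧ N.index = k ∧
      Nonempty (N ≃* FreeGroup (Fin (1 + k * (n - 1)))) := by
  haveI : NeZero k := ⟨by omega⟩
  set J := Fin (n - 1) with hJ
  have hn1 : n - 1 + 1 = n := by omega
  let e0 : Fin n ≃ Option J := (finCongr hn1.symm).trans (finSuccEquiv (n - 1))
  let E0 : FreeGroup (Fin n) ≃* FGNS.GG J := (freeGroupCongr e0).trans (FGNS.equivA J)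
  let f : FreeGroup (Fin n) →* Multiplicative (ZMod k) := (FGNS.χ J k).comp E0.toMonoidHom
  have hχs : Function.Surjective (FGNS.χ J k) := by
    apply Function.Surjective.comp (g := ⇑(AddMonoidHom.toMultiplicative (Int.castAddHom (ZMod k))))
    · intro x
      obtain ⟨m, hm⟩ := ZMod.intCast_surjective (n := k) (toAdd x)
      exact ⟨ofAdd m, by simp [hm]⟩
    · exact rightHom_surjective
  have hsurj : Function.Surjective f := hχs.comp E0.surjective
  refine ⟨f.ker, inferInstance, ?_, ?_⟩
  · rw [Subgroup.index_ker, MonoidHom.range_eq_top_of_surjective f hsurj,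
      Nat.card_congr Subgroup.topEquiv.toEquiv, Nat.card_congr Multiplicative.toAdd,
      Nat.card_zmod]
  · have hker : f.ker = ((FGNS.χ J k).ker).comap E0.toMonoidHom :=
      (MonoidHom.comap_ker _ _).symm
    let e1 : f.ker ≃* (f.ker.map E0.toMonoidHom) := E0.subgroupMap f.ker
    have hmap : f.ker.map E0.toMonoidHom = (FGNS.χ J k).ker := by
      rw [hker, Subgroup.map_comap_eq_self_of_surjective E0.surjective]
    let e2 := MulEquiv.subgroupCongr hmap
    let e3 := (MulEquiv.subgroupCongr (FGNS.range_ψ J k)).symm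
    let e4 := (MonoidHom.ofInjective (FGNS.ψ_injective J k)).symm
    let e5 := (FGNS.equivA (Fin k × J)).symm
    have hcard : Fintype.card (Option (Fin k × J)) = 1 + k * (n - 1) := by
      simp [hJ]
      ring
    let ecard : Option (Fin k × J) ≃ Fin (1 + k * (n - 1)) :=
      (Fintype.equivFin _).trans (finCongr hcard)
    exact ⟨(((((e1.trans e2).trans e3).trans e4).trans e5).trans (freeGroupCongr ecard))⟩
end

section
/- Let m, n be natural numbers with m ≥ 2 and n ≥ 2. If the free group of rank n has a nontrivial normal subgroup of finite index that is isomorphic to the free group of rank m, then (n − 1) divides (m − 1). -/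
/-!
We prove the Schreier index formula `m - 1 = [F : N] * (n - 1)` by an explicit
cohomological dimension count over `ℚ`: with `F = FreeGroup (Fin n)`, `Q = F ⧸ N`
and `V = Q → ℚ` (with `F` acting by right translation through `Q`), the space of
derivations `F → V` is `V ^ n` (free group!), inner derivations have dimension
`|Q| - 1`, and derivations mod inner derivations is `Hom(N, ℚ) ≅ ℚ ^ m`
(an explicit form of Shapiro's lemma).
-/

namespace SchreierAux

open Multiplicative

variable {n : ℕ} (N : Subgroup (FreeGroup (Fin n))) [N.Normal]

abbrev Q := FreeGroup (Fin n) ⧸ N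

abbrev V := Q N → ℚ

def pi : FreeGroup (Fin n) →* Q N := QuotientGroup.mk' N

lemma pi_mem_one {g : FreeGroup (Fin n)} (hg : g ∈ N) : pi N g = 1 :=
  (QuotientGroup.eq_one_iff g).mpr hg

lemma mem_of_pi_eq_one {g : FreeGroup (Fin n)} (hg : pi N g = 1) : g ∈ N :=
  (QuotientGroup.eq_one_iff g).mp hg

/-- Right translation by `q` on `V`. -/
def rT (q : Q N) : V N ≃+ V N where
  toFun f := fun x => f (x * q)
  invFun f := fun x => f (x * q⁻¹)
  left_inv f := by funext x; simp [mul_assoc]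
  right_inv f := by funext x; simp [mul_assoc]
  map_add' f g := rfl

lemma rT_apply (q : Q N) (f : V N) (x : Q N) : rT N q f x = f (x * q) := rfl

lemma rT_one : rT N 1 = AddEquiv.refl (V N) := by
  ext f x; simp [rT_apply]

lemma rT_mul (q q' : Q N) (f : V N) : rT N (q * q') f = rT N q (rT N q' f) := by
  funext x; simp [rT_apply, mul_assoc]

/-- The action of `Q` on `Multiplicative V` as a monoid hom to `MulAut`. -/
def A : Q N →* MulAut (Multiplicative (V N)) where
  toFun q := AddEquiv.toMultiplicative (rT N q)
  map_one' := by ext f; simp [rT_one]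
  map_mul' q q' := by ext f; simp [AddEquiv.toMultiplicative, rT_mul]

def act : FreeGroup (Fin n) →* MulAut (Multiplicative (V N)) := (A N).comp (pi N)

lemma act_apply (g : FreeGroup (Fin n)) (f : Multiplicative (V N)) :
    act N g f = ofAdd (rT N (pi N g) (toAdd f)) := rfl

/-- The semidirect lift determined by a tuple `v : Fin n → V`. -/
noncomputable def sd (v : Fin n → V N) :
    FreeGroup (Fin n) →* Multiplicative (V N) ⋊[act N] FreeGroup (Fin n) :=
  FreeGroup.lift fun i => ⟨ofAdd (v i), FreeGroup.of i⟩

lemma sd_right (v : Fin n → V N) (g : FreeGroup (Fin n)) : (sd N v g).right = g := by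
  have : (SemidirectProduct.rightHom.comp (sd N v)) =
      MonoidHom.id (FreeGroup (Fin n)) := by
    apply FreeGroup.ext_hom
    intro i
    simp [sd]
  exact DFunLike.congr_fun this g

/-- The derivation `F → V` with values `v` on the generators. -/
noncomputable def der (v : Fin n → V N) (g : FreeGroup (Fin n)) : V N :=
  toAdd (sd N v g).left

lemma der_of (v : Fin n → V N) (i : Fin n) : der N v (FreeGroup.of i) = v i := by
  simp [der, sd]

lemma der_one (v : Fin n → V N) : der N v 1 = 0 := by
  simp [der]

lemma pure_eq (i : Fin n) : (pure i : FreeGroup (Fin n)) = FreeGroup.of i := rfl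

lemma der_mul (v : Fin n → V N) (g h : FreeGroup (Fin n)) :
    der N v (g * h) = der N v g + rT N (pi N g) (der N v h) := by
  unfold der
  rw [map_mul, SemidirectProduct.mul_left, sd_right, toAdd_mul]
  rfl

lemma der_inv (v : Fin n → V N) (g : FreeGroup (Fin n)) :
    der N v g⁻¹ = - rT N (pi N g⁻¹) (der N v g) := by
  have h0 := der_mul N v g g⁻¹
  rw [mul_inv_cancel, der_one] at h0
  have h1 : rT N (pi N g) (der N v g⁻¹) = - der N v g := by
    rw [eq_neg_iff_add_eq_zero, add_comm]; exact h0.symm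
  have h2 : pi N g⁻¹ * pi N g = 1 := by rw [← map_mul, inv_mul_cancel, map_one]
  calc der N v g⁻¹ = rT N 1 (der N v g⁻¹) := by rw [rT_one]; rfl
    _ = rT N (pi N g⁻¹) (rT N (pi N g) (der N v g⁻¹)) := by rw [← rT_mul, h2]
    _ = - rT N (pi N g⁻¹) (der N v g) := by rw [h1, map_neg]

lemma der_add (v w : Fin n → V N) (g : FreeGroup (Fin n)) :
    der N v g + der N w g = der N (v + w) g := by
  induction g using FreeGroup.induction_on with
  | C1 => simp [der_one]
  | of i => simp [pure_eq, der_of]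
  | inv_of i ih => rw [der_inv, der_inv, der_inv, ← ih, map_add]; abel
  | mul g h ihg ihh =>
      rw [der_mul, der_mul, der_mul, ← ihg, ← ihh, map_add]; abel

lemma rT_smul (q : Q N) (c : ℚ) (f : V N) : rT N q (c • f) = c • rT N q f := rfl

lemma der_smul (c : ℚ) (v : Fin n → V N) (g : FreeGroup (Fin n)) :
    c • der N v g = der N (c • v) g := by
  induction g using FreeGroup.induction_on with
  | C1 => simp [der_one]
  | of i => simp [pure_eq, der_of]
  | inv_of i ih => rw [der_inv, der_inv, ← ih, rT_smul]; module
  | mul g h ihg ihh => rw [der_mul, der_mul, ← ihg, ← ihh, rT_smul]; module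

lemma der_N_mul (v : Fin n → V N) {ν : FreeGroup (Fin n)} (hν : ν ∈ N)
    (g : FreeGroup (Fin n)) : der N v (ν * g) = der N v ν + der N v g := by
  rw [der_mul, pi_mem_one N hν, rT_one]; rfl

lemma der_hom_N (v : Fin n → V N) (ν ν' : N) :
    der N v ((ν : FreeGroup (Fin n)) * ν') 1 = der N v ν 1 + der N v ν' 1 :=
  congrFun (der_N_mul N v ν.2 ν') 1

/-- Inner derivations. -/
def beta : V N →ₗ[ℚ] (Fin n → V N) where
  toFun f := fun i => rT N (pi N (FreeGroup.of i)) f - f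
  map_add' f g := by funext i x; simp [rT_apply]; ring
  map_smul' c f := by funext i x; simp [rT_apply]; ring

lemma der_beta (f : V N) (g : FreeGroup (Fin n)) :
    der N (beta N f) g = rT N (pi N g) f - f := by
  induction g using FreeGroup.induction_on with
  | C1 => rw [der_one, map_one, rT_one]; simp
  | of i => rw [der_of]; rfl
  | inv_of i ih =>
      rw [der_inv, ih, map_sub]
      have : rT N (pi N (FreeGroup.of i)⁻¹) (rT N (pi N (FreeGroup.of i)) f) = f := by
        rw [← rT_mul, ← map_mul, inv_mul_cancel, map_one, rT_one]; rfl
      rw [this]; abel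
  | mul g h ihg ihh =>
      rw [der_mul, ihg, ihh, map_sub, ← rT_mul, ← map_mul]; abel

/-- A section of `pi` sending `1` to `1`. -/
noncomputable def sec : Q N → FreeGroup (Fin n) := fun x =>
  haveI := Classical.dec (x = 1)
  if x = 1 then 1 else x.out

lemma sec_spec (x : Q N) : pi N (sec N x) = x := by
  unfold sec
  haveI := Classical.dec (x = 1)
  split_ifs with h
  · rw [map_one, h]
  · exact QuotientGroup.out_eq' x

lemma sec_one : sec N 1 = 1 := by unfold sec; simp

lemma sec_mem (g : FreeGroup (Fin n)) : g * (sec N (pi N g))⁻¹ ∈ N := by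
  apply mem_of_pi_eq_one
  rw [map_mul, map_inv, sec_spec, mul_inv_cancel]

section Theta

variable {m : ℕ} (e : N ≃* FreeGroup (Fin m))

/-- The main linear map: from tuples (≅ derivations) to `ℚ^m ≅ Hom(N, ℚ)`. -/
noncomputable def theta : (Fin n → V N) →ₗ[ℚ] (Fin m → ℚ) where
  toFun v := fun j => der N v ((e.symm (FreeGroup.of j) : N) : FreeGroup (Fin n)) 1
  map_add' v w := by funext j; exact (congrFun (der_add N v w _) 1).symm
  map_smul' c v := by funext j; exact (congrFun (der_smul N c v _) 1).symm

lemma theta_apply (v : Fin n → V N) (j : Fin m) :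
    theta N e v j = der N v ((e.symm (FreeGroup.of j) : N) : FreeGroup (Fin n)) 1 := rfl

/-- Surjectivity of `theta` (Shapiro, one direction). -/
lemma theta_surjective : Function.Surjective (theta N e) := by
  intro w
  -- the additive character on `N` with values `w` on the generators (via `e`)
  set χ : N →* Multiplicative ℚ :=
    (FreeGroup.lift fun j => ofAdd (w j)).comp e.toMonoidHom with hχ
  -- the associated `N`-invariant potential
  set δ : FreeGroup (Fin n) → ℚ :=
    fun g => toAdd (χ ⟨g * (sec N (pi N g))⁻¹, sec_mem N g⟩) with hδ
  have delta_N_mul : ∀ (ν x : FreeGroup (Fin n)) (hν : ν ∈ N),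
      δ (ν * x) = toAdd (χ ⟨ν, hν⟩) + δ x := by
    intro ν x hν
    have hpi : pi N (ν * x) = pi N x := by rw [map_mul, pi_mem_one N hν, one_mul]
    have hprod : (⟨ν * x * (sec N (pi N (ν * x)))⁻¹, sec_mem N (ν * x)⟩ : N)
        = ⟨ν, hν⟩ * ⟨x * (sec N (pi N x))⁻¹, sec_mem N x⟩ := by
      ext
      simp only [Subgroup.coe_mul, hpi, mul_assoc]
    simp only [hδ]
    rw [hprod, map_mul, toAdd_mul]
  have delta_cocycle : ∀ a h : FreeGroup (Fin n),
      δ (a * h) - δ a = δ (sec N (pi N a) * h) - δ (sec N (pi N a)) := by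
    intro a h
    set b := sec N (pi N a) with hb
    have hν : a * b⁻¹ ∈ N := sec_mem N a
    have ha : a = (a * b⁻¹) * b := by group
    have h1 : δ (a * h) = toAdd (χ ⟨a * b⁻¹, hν⟩) + δ (b * h) := by
      calc δ (a * h) = δ ((a * b⁻¹) * (b * h)) := by rw [← mul_assoc, ← ha]
        _ = toAdd (χ ⟨a * b⁻¹, hν⟩) + δ (b * h) := delta_N_mul _ _ hν
    have h2 : δ a = toAdd (χ ⟨a * b⁻¹, hν⟩) + δ b := by
      calc δ a = δ ((a * b⁻¹) * b) := by rw [← ha]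
        _ = toAdd (χ ⟨a * b⁻¹, hν⟩) + δ b := delta_N_mul _ _ hν
    rw [h1, h2]; ring
  -- the preimage tuple
  set v : Fin n → V N := fun i => fun x => δ (sec N x * FreeGroup.of i) - δ (sec N x) with hv
  have key : ∀ g : FreeGroup (Fin n),
      der N v g = fun x => δ (sec N x * g) - δ (sec N x) := by
    intro g
    induction g using FreeGroup.induction_on with
    | C1 => funext x; rw [der_one]; simp
    | of i => funext x; rw [der_of]
    | inv_of i ih =>
        funext x
        have hpir : pi N (sec N x * (FreeGroup.of i)⁻¹) = x * (pi N (FreeGroup.of i))⁻¹ := by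
          rw [map_mul, map_inv, sec_spec]
        have hc := delta_cocycle (sec N x * (FreeGroup.of i)⁻¹) (FreeGroup.of i)
        rw [hpir] at hc
        have hcan : sec N x * (FreeGroup.of i)⁻¹ * FreeGroup.of i = sec N x := by group
        rw [hcan] at hc
        rw [der_inv, ih]
        simp only [map_inv, Pi.neg_apply, rT_apply]
        linarith [hc]
    | mul g h ihg ihh =>
        funext x
        rw [der_mul, ihg, ihh]
        simp only [Pi.add_apply]
        rw [rT_apply]
        have hpa : pi N (sec N x * g) = x * pi N g := by rw [map_mul, sec_spec]
        have hc := delta_cocycle (sec N x * g) h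
        rw [hpa] at hc
        rw [show sec N x * g * h = sec N x * (g * h) from mul_assoc _ _ _] at hc
        linarith [hc]
  refine ⟨v, ?_⟩
  funext j
  rw [theta_apply, key]
  set ν : N := e.symm (FreeGroup.of j) with hν
  show δ (sec N 1 * (ν : FreeGroup (Fin n))) - δ (sec N 1) = w j
  have hpiν : pi N (ν : FreeGroup (Fin n)) = 1 := pi_mem_one N ν.2
  have h1 : δ ((ν : FreeGroup (Fin n))) = toAdd (χ ν) := by
    have : (⟨(ν : FreeGroup (Fin n)) * (sec N (pi N (ν : FreeGroup (Fin n))))⁻¹,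
        sec_mem N _⟩ : N) = ν := by
      ext; simp [hpiν, sec_one]
    simp only [hδ]
    rw [this]
  have h2 : δ 1 = 0 := by
    have : (⟨(1 : FreeGroup (Fin n)) * (sec N (pi N (1 : FreeGroup (Fin n))))⁻¹,
        sec_mem N _⟩ : N) = 1 := by
      ext; simp [sec_one]
    simp only [hδ]
    rw [this, map_one, toAdd_one]
  rw [sec_one, one_mul, h1, h2, sub_zero, hχ]
  simp [hν]

/-- The kernel of `theta` is exactly the inner derivations (Shapiro, other direction). -/
lemma ker_theta : LinearMap.ker (theta N e) = LinearMap.range (beta N) := by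
  apply le_antisymm
  · -- ker ⊆ range beta
    intro v hv
    rw [LinearMap.mem_ker] at hv
    -- the character `ν ↦ der v ν 1` vanishes on all of `N`
    have h0 : ∀ ν : N, der N v (ν : FreeGroup (Fin n)) 1 = 0 := by
      have hhom : ((⟨⟨fun ν : N => ofAdd (der N v (ν : FreeGroup (Fin n)) 1), by
          simp [der_one]⟩, fun ν ν' => by
            simp only [OneHom.coe_mk, Subgroup.coe_mul]
            rw [der_hom_N, ofAdd_add]⟩ : N →* Multiplicative ℚ).comp
          e.symm.toMonoidHom) = 1 := by
        apply FreeGroup.ext_hom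
        intro j
        have := congrFun hv j
        rw [theta_apply] at this
        simp only [MonoidHom.comp_apply, MulEquiv.coe_toMonoidHom, MonoidHom.coe_mk,
          OneHom.coe_mk, MonoidHom.one_apply]
        rw [this]; rfl
      intro ν
      have := DFunLike.congr_fun hhom (e ν)
      simp only [MonoidHom.comp_apply, MulEquiv.coe_toMonoidHom, MulEquiv.symm_apply_apply,
        MonoidHom.coe_mk, OneHom.coe_mk, MonoidHom.one_apply] at this
      exact ofAdd_eq_one.mp this
    have hsame : ∀ a b : FreeGroup (Fin n), pi N a = pi N b →
        der N v a 1 = der N v b 1 := by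
      intro a b hab
      have hν : a * b⁻¹ ∈ N := by
        apply mem_of_pi_eq_one
        rw [map_mul, map_inv, hab, mul_inv_cancel]
      have : der N v ((a * b⁻¹) * b) = der N v (a * b⁻¹) + der N v b :=
        der_N_mul N v hν b
      rw [show (a * b⁻¹) * b = a by group] at this
      have h1 := congrFun this 1
      have h00 : der N v (a * b⁻¹) 1 = 0 := h0 ⟨a * b⁻¹, hν⟩
      simp only [Pi.add_apply] at h1
      rw [h00, zero_add] at h1
      exact h1
    refine ⟨fun x => der N v (sec N x) 1, ?_⟩
    funext i x
    show rT N (pi N (FreeGroup.of i)) (fun y => der N v (sec N y) 1) x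
        - der N v (sec N x) 1 = v i x
    rw [rT_apply]
    have ha : der N v (sec N (x * pi N (FreeGroup.of i))) 1
        = der N v (sec N x * FreeGroup.of i) 1 := by
      apply hsame
      rw [sec_spec, map_mul, sec_spec]
    have hb : der N v (sec N x * FreeGroup.of i)
        = der N v (sec N x) + rT N (pi N (sec N x)) (der N v (FreeGroup.of i)) :=
      der_mul N v _ _
    have hb1 := congrFun hb 1
    rw [der_of] at hb1
    have : rT N (pi N (sec N x)) (v i) 1 = v i x := by
      rw [rT_apply, one_mul, sec_spec]
    rw [ha, hb1]
    simp only [Pi.add_apply]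
    rw [this]
    ring
  · -- range beta ⊆ ker
    rintro _ ⟨f, rfl⟩
    rw [LinearMap.mem_ker]
    funext j
    rw [theta_apply, der_beta]
    set ν : N := e.symm (FreeGroup.of j)
    have hpiν : pi N (ν : FreeGroup (Fin n)) = 1 := pi_mem_one N ν.2
    simp only [Pi.sub_apply, hpiν, rT_one]
    show f 1 - f 1 = 0
    ring

end Theta

/-- Constants. -/
def constMap : ℚ →ₗ[ℚ] V N where
  toFun c := fun _ => c
  map_add' a b := rfl
  map_smul' a b := rfl

lemma ker_beta : LinearMap.ker (beta N) = LinearMap.range (constMap N) := by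
  apply le_antisymm
  · intro f hf
    rw [LinearMap.mem_ker] at hf
    have hgen : ∀ i : Fin n, ∀ x : Q N, f (x * pi N (FreeGroup.of i)) = f x := by
      intro i x
      have := congrFun (congrFun hf i) x
      show _ = _
      have : rT N (pi N (FreeGroup.of i)) f x - f x = 0 := this
      rw [rT_apply] at this
      linarith
    have hall : ∀ g : FreeGroup (Fin n), ∀ x : Q N, f (x * pi N g) = f x := by
      intro g
      induction g using FreeGroup.induction_on with
      | C1 => intro x; simp
      | of i => exact hgen i
      | inv_of i ih =>
          intro x
          have := ih (x * pi N (FreeGroup.of i)⁻¹)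
          rw [map_inv] at *
          rw [mul_assoc, inv_mul_cancel, mul_one] at this
          rw [← this]
      | mul g h ihg ihh =>
          intro x
          rw [map_mul, ← mul_assoc, ihh, ihg]
    refine ⟨f 1, ?_⟩
    funext x
    show f 1 = f x
    obtain ⟨g, hg⟩ : ∃ g, pi N g = x := ⟨x.out, QuotientGroup.out_eq' x⟩
    have := hall g 1
    rw [one_mul, hg] at this
    exact this.symm
  · rintro _ ⟨c, rfl⟩
    rw [LinearMap.mem_ker]
    funext i x
    show rT N (pi N (FreeGroup.of i)) (constMap N c) x - constMap N c x = 0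
    rw [rT_apply]
    show c - c = 0
    ring

lemma constMap_injective : Function.Injective (constMap N) := by
  intro a b hab
  exact congrFun hab 1

end SchreierAux

open SchreierAux in
/-- If the free group of rank `n ≥ 2` has a nontrivial normal subgroup of finite
index isomorphic to the free group of rank `m ≥ 2`, then `(n - 1) ∣ (m - 1)`. -/
theorem normal_subgroup_rank_divisibility (m n : ℕ) (hm : 2 ≤ m) (hn : 2 ≤ n)
    (N : Subgroup (FreeGroup (Fin n))) (hnorm : N.Normal) (hnontriv : N ≠ ⊥)
    (hfin : Finite (FreeGroup (Fin n) ⧸ N))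
    (hiso : Nonempty (N ≃* FreeGroup (Fin m))) :
    (n - 1) ∣ (m - 1) := by
  haveI := hnorm
  obtain ⟨e⟩ := hiso
  haveI : Fintype (Q N) := Fintype.ofFinite _
  set q : ℕ := Fintype.card (Q N) with hq
  have hq1 : 1 ≤ q := Fintype.card_pos
  -- dimensions
  have hV : Module.finrank ℚ (V N) = q := Module.finrank_pi ℚ
  have hdom : Module.finrank ℚ (Fin n → V N) = n * q := by
    rw [Module.finrank_pi_fintype ℚ]
    simp [hV, Finset.sum_const, mul_comm]
  have hcodom : Module.finrank ℚ (Fin m → ℚ) = m := by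
    rw [Module.finrank_pi ℚ, Fintype.card_fin]
  -- rank-nullity for theta
  have h1 : m + Module.finrank ℚ (LinearMap.range (beta N)) = n * q := by
    have := LinearMap.finrank_range_add_finrank_ker (theta N e)
    rw [LinearMap.range_eq_top.mpr (theta_surjective N e), ker_theta N e, hdom] at this
    rw [← this, finrank_top, hcodom]
  -- rank-nullity for beta
  have h2 : Module.finrank ℚ (LinearMap.range (beta N)) + 1 = q := by
    have := LinearMap.finrank_range_add_finrank_ker (beta N)
    rw [hV, ker_beta N] at this
    have hker : Module.finrank ℚ (LinearMap.range (constMap N)) = 1 := by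
      rw [← (LinearEquiv.ofInjective (constMap N) (constMap_injective N)).finrank_eq]
      exact Module.finrank_self ℚ
    rwa [hker] at this
  set r : ℕ := Module.finrank ℚ (LinearMap.range (beta N)) with hr
  refine ⟨q, ?_⟩
  have hm1 : 1 ≤ m := by omega
  have hn1 : 1 ≤ n := by omega
  zify [hm1, hn1]
  have h1' : (m : ℤ) + r = n * q := by exact_mod_cast h1
  have h2' : (r : ℤ) + 1 = q := by exact_mod_cast h2
  linear_combination h1' - h2'
end
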